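/- Let a, b in R<x> be homogeneous analytic polynomials (containing no starred variables) with deg(a) = deg(b) > 0. Then a + b* is irreducible in R<x,x*>. -/

import Mathlib

open scoped BigOperators

noncomputable section

/-- The free real *-algebra on `g` variables `x₁,…,x_g` and their formal adjoints
`x₁*,…,x_g*`, modeled as the monoid algebra of the free monoid on `2g` letters,
where `Sum.inl i` is `xᵢ` and `Sum.inr i` is `xᵢ*`. -/
abbrev FreeStarAlg (g : ℕ) := MonoidAlgebra ℝ (FreeMonoid (Fin g ⊕ Fin g))

namespace FreeStarAlg

variable {g : ℕ}

/-- The involution on words: reverse the word and star each letter. -/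
def starWord (w : FreeMonoid (Fin g ⊕ Fin g)) : FreeMonoid (Fin g ⊕ Fin g) :=
  FreeMonoid.ofList (((FreeMonoid.toList w).map Sum.swap).reverse)

/-- The involution `p ↦ p*` on the free *-algebra. -/
def starP (p : FreeStarAlg g) : FreeStarAlg g :=
  MonoidAlgebra.mapDomain starWord p

/-- The monomial corresponding to a word. -/
def mono (w : FreeMonoid (Fin g ⊕ Fin g)) : FreeStarAlg g :=
  MonoidAlgebra.single w 1

/-- Degree of a noncommutative polynomial. -/
def deg (p : FreeStarAlg g) : ℕ :=
  p.coeff.support.sup fun w => (FreeMonoid.toList w).length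

/-- `p` is homogeneous of degree `d`: every word appearing in `p` has length `d`. -/
def IsHom (d : ℕ) (p : FreeStarAlg g) : Prop :=
  ∀ w ∈ p.coeff.support, (FreeMonoid.toList w).length = d

/-- `p` is a (finite) sum of hermitian squares `qᵢ* qᵢ`. -/
def IsSOS (p : FreeStarAlg g) : Prop :=
  ∃ (k : ℕ) (q : Fin k → FreeStarAlg g), p = ∑ i, starP (q i) * q i

/-- Membership in `I + I*`. -/
def MemIplusIstar (I : Submodule (FreeStarAlg g) (FreeStarAlg g)) (p : FreeStarAlg g) : Prop :=
  ∃ u ∈ I, ∃ v ∈ I, p = u + starP v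

/-- A left ideal `I` is real if `∑ aᵢ* aᵢ ∈ I + I*` forces every `aᵢ ∈ I`. -/
def IsRealIdeal (I : Submodule (FreeStarAlg g) (FreeStarAlg g)) : Prop :=
  ∀ (r : ℕ) (a : Fin r → FreeStarAlg g),
    MemIplusIstar I (∑ i, starP (a i) * a i) → ∀ i, a i ∈ I

/-- The left ideal generated by a set `S`. -/
def leftIdealGen (S : Set (FreeStarAlg g)) : Submodule (FreeStarAlg g) (FreeStarAlg g) :=
  Submodule.span (FreeStarAlg g) S

/-- `p` is irreducible: it cannot be written as a product of two polynomials of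
strictly smaller degree. -/
def Irred (p : FreeStarAlg g) : Prop :=
  ¬ ∃ q r : FreeStarAlg g, p = q * r ∧ deg q < deg p ∧ deg r < deg p

/-- `p` is analytic: it contains no starred variables. -/
def IsAnalytic (p : FreeStarAlg g) : Prop :=
  ∀ w ∈ p.coeff.support, ∀ l ∈ FreeMonoid.toList w, l.isLeft

end FreeStarAlg

open FreeStarAlg

namespace Stmt13Aux

variable {g : ℕ}

lemma toList_mul' (s t : FreeMonoid (Fin g ⊕ Fin g)) :
    FreeMonoid.toList (s * t) = FreeMonoid.toList s ++ FreeMonoid.toList t := rfl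

lemma starWord_starWord (w : FreeMonoid (Fin g ⊕ Fin g)) : starWord (starWord w) = w := by
  apply FreeMonoid.toList.injective
  simp [starWord, List.map_reverse, List.map_map, Function.comp, Sum.swap_swap]

lemma starWord_inj : Function.Injective (starWord (g := g)) :=
  Function.LeftInverse.injective starWord_starWord

lemma starP_apply_starWord (b : FreeStarAlg g) (w : FreeMonoid (Fin g ⊕ Fin g)) :
    (starP b).coeff (starWord w) = b.coeff w :=
  Finsupp.mapDomain_apply starWord_inj b.coeff w

/-- The key coefficient formula for a product, when the word has full length. -/
lemma coeff_mul (p1 p2 : FreeStarAlg g) (e1 e2 : ℕ)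
    (h1 : ∀ s ∈ p1.coeff.support, (FreeMonoid.toList s).length ≤ e1)
    (h2 : ∀ t ∈ p2.coeff.support, (FreeMonoid.toList t).length ≤ e2)
    (w : FreeMonoid (Fin g ⊕ Fin g)) (hw : (FreeMonoid.toList w).length = e1 + e2) :
    (p1 * p2).coeff w =
      p1.coeff (FreeMonoid.ofList ((FreeMonoid.toList w).take e1)) *
      p2.coeff (FreeMonoid.ofList ((FreeMonoid.toList w).drop e1)) := by
  classical
  set wt := FreeMonoid.ofList ((FreeMonoid.toList w).take e1) with hwtdef
  set wd := FreeMonoid.ofList ((FreeMonoid.toList w).drop e1) with hwddef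
  have hmulw : wt * wd = w := by
    apply FreeMonoid.toList.injective
    simp [toList_mul', hwtdef, hwddef]
  have key : ∀ s ∈ p1.coeff.support, ∀ t ∈ p2.coeff.support, s * t = w → s = wt ∧ t = wd := by
    intro s hs t ht hst
    have hls : (FreeMonoid.toList s).length = e1 := by
      have h1' := h1 s hs
      have h2' := h2 t ht
      have hlen : (FreeMonoid.toList s).length + (FreeMonoid.toList t).length = e1 + e2 := by
        rw [← hw, ← hst, toList_mul', List.length_append]
      omega
    have hlist : FreeMonoid.toList s ++ FreeMonoid.toList t = FreeMonoid.toList w := by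
      rw [← hst, toList_mul']
    constructor
    · apply FreeMonoid.toList.injective
      rw [hwtdef, FreeMonoid.toList_ofList, ← hlist, ← hls, List.take_left]
    · apply FreeMonoid.toList.injective
      rw [hwddef, FreeMonoid.toList_ofList, ← hlist, ← hls, List.drop_left]
  rw [MonoidAlgebra.coeff_mul]
  simp only [Finsupp.sum]
  by_cases hwt1 : wt ∈ p1.coeff.support
  · by_cases hwd2 : wd ∈ p2.coeff.support
    · rw [Finset.sum_eq_single_of_mem wt hwt1, Finset.sum_eq_single_of_mem wd hwd2,
        if_pos hmulw]
      · intro t ht hne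
        rw [if_neg]
        intro hst
        exact hne (key wt hwt1 t ht hst).2
      · intro s hs hne
        apply Finset.sum_eq_zero
        intro t ht
        rw [if_neg]
        intro hst
        exact hne (key s hs t ht hst).1
    · rw [Finsupp.notMem_support_iff.mp hwd2, mul_zero]
      apply Finset.sum_eq_zero; intro s hs
      apply Finset.sum_eq_zero; intro t ht
      rw [if_neg]
      intro hst
      exact hwd2 ((key s hs t ht hst).2 ▸ ht)
  · rw [Finsupp.notMem_support_iff.mp hwt1, zero_mul]
    apply Finset.sum_eq_zero; intro s hs
    apply Finset.sum_eq_zero; intro t ht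
    rw [if_neg]
    intro hst
    exact hwt1 ((key s hs t ht hst).1 ▸ hs)

lemma not_left_right (l : Fin g ⊕ Fin g) (h1 : l.isLeft) (h2 : l.isRight) : False := by
  cases l <;> simp_all

end Stmt13Aux

/-- If `a, b` are nonzero homogeneous analytic polynomials of the same
positive degree `d`, then `a + b*` is irreducible. -/
theorem stmt13 {g d : ℕ} (a b : FreeStarAlg g)
    (ha : IsAnalytic a) (hb : IsAnalytic b)
    (hahom : IsHom d a) (hbhom : IsHom d b)
    (ha0 : a ≠ 0) (hb0 : b ≠ 0) (hd : 0 < d) :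
    Irred (a + starP b) := by
  classical
  rintro ⟨q, r, hqr, hq, hr⟩
  set P := a + starP b with hPdef
  -- facts about the support of starP b
  have hbsupp : ∀ w ∈ (starP b).coeff.support,
      (∀ l ∈ FreeMonoid.toList w, l.isRight) ∧ (FreeMonoid.toList w).length = d := by
    intro w hw
    have hw' := Finsupp.mapDomain_support (f := starWord) (s := b.coeff) hw
    obtain ⟨v0, hv0, rfl⟩ := Finset.mem_image.mp hw'
    constructor
    · intro l hl
      simp only [starWord, FreeMonoid.toList_ofList, List.mem_reverse, List.mem_map] at hl
      obtain ⟨l', hl', rfl⟩ := hl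
      have := hb v0 hv0 l' hl'
      cases l' with
      | inl i => simp [Sum.swap]
      | inr i => simp at this
    · simp only [starWord, FreeMonoid.toList_ofList, List.length_reverse, List.length_map]
      exact hbhom v0 hv0
  -- a word cannot be both all-left and all-right if nonempty
  have hmix : ∀ w : FreeMonoid (Fin g ⊕ Fin g), (FreeMonoid.toList w).length = d →
      (∀ l ∈ FreeMonoid.toList w, l.isLeft) → (∀ l ∈ FreeMonoid.toList w, l.isRight) → False := by
    intro w hlen hL hR
    have hne : FreeMonoid.toList w ≠ [] := by
      intro h; rw [h] at hlen; simp at hlen; omega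
    obtain ⟨l, hl⟩ := List.exists_mem_of_ne_nil _ hne
    exact Stmt13Aux.not_left_right l (hL l hl) (hR l hl)
  -- P agrees with a on supp a
  have haP : ∀ u ∈ a.coeff.support, P.coeff u = a.coeff u := by
    intro u hu
    have hzero : (starP b).coeff u = 0 := by
      by_contra h
      have hmem : u ∈ (starP b).coeff.support := Finsupp.mem_support_iff.mpr h
      exact hmix u (hahom u hu) (ha u hu) (hbsupp u hmem).1
    show a.coeff u + (starP b).coeff u = a.coeff u
    rw [hzero, add_zero]
  obtain ⟨u, hu⟩ := Finsupp.support_nonempty_iff.mpr (mt MonoidAlgebra.coeff_eq_zero.mp ha0)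
  have hPu : P.coeff u ≠ 0 := by rw [haP u hu]; exact Finsupp.mem_support_iff.mp hu
  have hPne : P ≠ 0 := by intro h; rw [h] at hPu; simp at hPu
  -- support of P
  have hPsupp : ∀ w ∈ P.coeff.support,
      ((∀ l ∈ FreeMonoid.toList w, l.isLeft) ∨ (∀ l ∈ FreeMonoid.toList w, l.isRight)) ∧
      (FreeMonoid.toList w).length = d := by
    intro w hw
    have := Finsupp.support_add (g₁ := a.coeff) (g₂ := (starP b).coeff) hw
    rcases Finset.mem_union.mp this with h | h
    · exact ⟨Or.inl (ha w h), hahom w h⟩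
    · exact ⟨Or.inr (hbsupp w h).1, (hbsupp w h).2⟩
  have hdegP : deg P = d := by
    apply le_antisymm
    · exact Finset.sup_le fun w hw => le_of_eq (hPsupp w hw).2
    · have hmem : u ∈ P.coeff.support := Finsupp.mem_support_iff.mpr hPu
      calc d = (FreeMonoid.toList u).length := (hahom u hu).symm
        _ ≤ deg P := Finset.le_sup hmem
  rw [hdegP] at hq hr
  have hq0 : q ≠ 0 := by intro h; rw [h, zero_mul] at hqr; exact hPne hqr
  have hr0 : r ≠ 0 := by intro h; rw [h, mul_zero] at hqr; exact hPne hqr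
  obtain ⟨s0, hs0, hs0len0⟩ :=
    Finset.exists_mem_eq_sup q.coeff.support (Finsupp.support_nonempty_iff.mpr (mt MonoidAlgebra.coeff_eq_zero.mp hq0))
      (fun w => (FreeMonoid.toList w).length)
  obtain ⟨t0, ht0, ht0len0⟩ :=
    Finset.exists_mem_eq_sup r.coeff.support (Finsupp.support_nonempty_iff.mpr (mt MonoidAlgebra.coeff_eq_zero.mp hr0))
      (fun w => (FreeMonoid.toList w).length)
  have hs0len : deg q = (FreeMonoid.toList s0).length := hs0len0
  have ht0len : deg r = (FreeMonoid.toList t0).length := ht0len0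
  set e1 := deg q with he1def
  set e2 := deg r with he2def
  have hbound1 : ∀ s ∈ q.coeff.support, (FreeMonoid.toList s).length ≤ e1 :=
    fun s hs => Finset.le_sup hs
  have hbound2 : ∀ t ∈ r.coeff.support, (FreeMonoid.toList t).length ≤ e2 :=
    fun t ht => Finset.le_sup ht
  have hcoeff : ∀ w : FreeMonoid (Fin g ⊕ Fin g), (FreeMonoid.toList w).length = e1 + e2 →
      P.coeff w = q.coeff (FreeMonoid.ofList ((FreeMonoid.toList w).take e1)) *
            r.coeff (FreeMonoid.ofList ((FreeMonoid.toList w).drop e1)) := by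
    intro w hw
    rw [hqr]
    exact Stmt13Aux.coeff_mul q r e1 e2 hbound1 hbound2 w hw
  -- e1 + e2 = d
  have hstlen : (FreeMonoid.toList (s0 * t0)).length = e1 + e2 := by
    rw [Stmt13Aux.toList_mul', List.length_append, ← hs0len, ← ht0len]
  have hPst : P.coeff (s0 * t0) = q.coeff s0 * r.coeff t0 := by
    rw [hcoeff _ hstlen]
    congr 1
    · congr 1
      apply FreeMonoid.toList.injective
      rw [FreeMonoid.toList_ofList, Stmt13Aux.toList_mul', hs0len, List.take_left]
    · congr 1
      apply FreeMonoid.toList.injective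
      rw [FreeMonoid.toList_ofList, Stmt13Aux.toList_mul', hs0len, List.drop_left]
  have hPst0 : P.coeff (s0 * t0) ≠ 0 := by
    rw [hPst]
    exact mul_ne_zero (Finsupp.mem_support_iff.mp hs0) (Finsupp.mem_support_iff.mp ht0)
  have hsum : e1 + e2 = d := by
    rw [← hstlen]
    exact (hPsupp _ (Finsupp.mem_support_iff.mpr hPst0)).2
  have he1pos : 0 < e1 := by omega
  have he2pos : 0 < e2 := by omega
  -- split u
  have hulen : (FreeMonoid.toList u).length = e1 + e2 := by rw [hahom u hu, hsum]
  have hPu' := hcoeff u hulen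
  rw [haP u hu] at hPu'
  have hqu : q.coeff (FreeMonoid.ofList ((FreeMonoid.toList u).take e1)) ≠ 0 := by
    intro h
    rw [h, zero_mul] at hPu'
    exact Finsupp.mem_support_iff.mp hu hPu'
  -- get v in supp (starP b) and split it
  obtain ⟨v0, hv0⟩ := Finsupp.support_nonempty_iff.mpr (mt MonoidAlgebra.coeff_eq_zero.mp hb0)
  set v := starWord v0 with hvdef
  have hvmem : v ∈ (starP b).coeff.support := by
    rw [Finsupp.mem_support_iff, hvdef, Stmt13Aux.starP_apply_starWord]
    exact Finsupp.mem_support_iff.mp hv0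
  have hvlen : (FreeMonoid.toList v).length = e1 + e2 := by rw [(hbsupp v hvmem).2, hsum]
  have haPv : P.coeff v = (starP b).coeff v := by
    have hzero : a.coeff v = 0 := by
      by_contra h
      exact hmix v (hbsupp v hvmem).2 (ha v (Finsupp.mem_support_iff.mpr h)) (hbsupp v hvmem).1
    show a.coeff v + (starP b).coeff v = (starP b).coeff v
    rw [hzero, zero_add]
  have hPv : P.coeff v ≠ 0 := by rw [haPv]; exact Finsupp.mem_support_iff.mp hvmem
  have hPv' := hcoeff v hvlen
  have hrv : r.coeff (FreeMonoid.ofList ((FreeMonoid.toList v).drop e1)) ≠ 0 := by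
    intro h
    rw [hPv', h, mul_zero] at hPv
    exact hPv rfl
  -- the mixed word
  set u1 := FreeMonoid.ofList ((FreeMonoid.toList u).take e1) with hu1def
  set v2 := FreeMonoid.ofList ((FreeMonoid.toList v).drop e1) with hv2def
  have hu1len : (FreeMonoid.toList u1).length = e1 := by
    rw [hu1def, FreeMonoid.toList_ofList, List.length_take, hulen]
    omega
  have hv2len : (FreeMonoid.toList v2).length = e2 := by
    rw [hv2def, FreeMonoid.toList_ofList, List.length_drop, hvlen]
    omega
  set w := u1 * v2 with hwdef
  have hwlen : (FreeMonoid.toList w).length = e1 + e2 := by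
    rw [hwdef, Stmt13Aux.toList_mul', List.length_append, hu1len, hv2len]
  have hPw : P.coeff w = q.coeff u1 * r.coeff v2 := by
    rw [hcoeff w hwlen]
    congr 1
    · congr 1
      apply FreeMonoid.toList.injective
      rw [FreeMonoid.toList_ofList, hwdef, Stmt13Aux.toList_mul', ← hu1len, List.take_left]
    · congr 1
      apply FreeMonoid.toList.injective
      rw [FreeMonoid.toList_ofList, hwdef, Stmt13Aux.toList_mul', ← hu1len, List.drop_left]
  have hPw0 : P.coeff w ≠ 0 := by rw [hPw]; exact mul_ne_zero hqu hrv
  have hwmem : w ∈ P.coeff.support := Finsupp.mem_support_iff.mpr hPw0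
  -- w contains both a left letter and a right letter
  have hu1ne : FreeMonoid.toList u1 ≠ [] := by
    intro h; rw [h] at hu1len; simp at hu1len; omega
  obtain ⟨lL, hlL⟩ := List.exists_mem_of_ne_nil _ hu1ne
  have hlLw : lL ∈ FreeMonoid.toList w := by
    rw [hwdef, Stmt13Aux.toList_mul']
    exact List.mem_append_left _ hlL
  have hlLleft : lL.isLeft := by
    apply ha u hu
    rw [hu1def, FreeMonoid.toList_ofList] at hlL
    exact List.take_subset _ _ hlL
  have hv2ne : FreeMonoid.toList v2 ≠ [] := by
    intro h; rw [h] at hv2len; simp at hv2len; omega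
  obtain ⟨lR, hlR⟩ := List.exists_mem_of_ne_nil _ hv2ne
  have hlRw : lR ∈ FreeMonoid.toList w := by
    rw [hwdef, Stmt13Aux.toList_mul']
    exact List.mem_append_right _ hlR
  have hlRright : lR.isRight := by
    apply (hbsupp v hvmem).1
    rw [hv2def, FreeMonoid.toList_ofList] at hlR
    exact List.drop_subset _ _ hlR
  rcases (hPsupp w hwmem).1 with hL | hR
  · exact Stmt13Aux.not_left_right lR (hL lR hlRw) hlRright
  · exact Stmt13Aux.not_left_right lL hlLleft (hR lL hlLw)
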